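/- arXiv:1803.11489 — 3 statements merged into one kernel-verified Lean document; each statement's English description precedes it below -/
import Mathlib

section
/- Let Q be a complex N×N matrix with spectral radius of the entrywise absolute value matrix |Q| strictly less than 1, let G = (I − Q)^{-1}, and for k ∈ [N] let Q_k denote the restriction of Q to rows and columns with indices ≥ k and G_k = (I − Q_k)^{-1}. Then det G = ∏_{k=1}^N G_k(k,k), where G_k(k,k) is the (k,k) entry of G_k. -/
open Matrix Function

theorem aux_ind : ∀ (N : ℕ) (A : Matrix (Fin N) (Fin N) ℂ),
    (∀ (m : Type) [Fintype m] [DecidableEq m] (e : m → Fin N),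
      Function.Injective e → (A.submatrix e e).det ≠ 0) →
    (A.det)⁻¹ = ∏ k : Fin N,
      ((A.submatrix (fun j : {j : Fin N // k ≤ j} => (j : Fin N))
          (fun j : {j : Fin N // k ≤ j} => (j : Fin N)))⁻¹ ⟨k, le_refl k⟩ ⟨k, le_refl k⟩) := by
  intro N
  induction N with
  | zero => intro A _; simp [Matrix.det_isEmpty]
  | succ N IH =>
    intro A h
    set A' : Matrix (Fin N) (Fin N) ℂ := A.submatrix Fin.succ Fin.succ with hA'
    have hdetA : A.det ≠ 0 := by
      have := h (Fin (N + 1)) id injective_id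
      simpa using this
    have hdetA' : A'.det ≠ 0 := h (Fin N) Fin.succ (Fin.succ_injective N)
    rw [Fin.prod_univ_succ]
    -- first factor
    have hε : ∀ j : Fin (N+1), (0 : Fin (N+1)) ≤ j := fun j => Fin.zero_le j
    let ε : {j : Fin (N+1) // (0:Fin (N+1)) ≤ j} ≃ Fin (N+1) :=
      ⟨fun j => j.1, fun j => ⟨j, hε j⟩, fun j => rfl, fun j => rfl⟩
    have e1 : A.submatrix (fun j : {j : Fin (N+1) // (0:Fin (N+1)) ≤ j} => (j : Fin (N+1)))
        (fun j : {j : Fin (N+1) // (0:Fin (N+1)) ≤ j} => (j : Fin (N+1))) = reindex ε.symm ε.symm A := by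
      ext a b; rfl
    have h0 : (A.submatrix (fun j : {j : Fin (N+1) // (0:Fin (N+1)) ≤ j} => (j : Fin (N+1)))
          (fun j : {j : Fin (N+1) // (0:Fin (N+1)) ≤ j} => (j : Fin (N+1))))⁻¹
          ⟨0, le_refl 0⟩ ⟨0, le_refl 0⟩ = A⁻¹ 0 0 := by
      rw [e1, Matrix.inv_reindex]
      simp [reindex_apply, ε]
    rw [h0]
    -- inverse entry at 0 0
    have hinv00 : A⁻¹ 0 0 = (A.det)⁻¹ * A'.det := by
      rw [Matrix.inv_def, Matrix.smul_apply, Matrix.adjugate_fin_succ_eq_det_submatrix]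
      simp [Ring.inverse_eq_inv', hA', smul_eq_mul]
    -- second factors
    have hsucc : ∀ j : Fin N,
        (A.submatrix (fun i : {i : Fin (N+1) // j.succ ≤ i} => (i : Fin (N+1)))
            (fun i : {i : Fin (N+1) // j.succ ≤ i} => (i : Fin (N+1))))⁻¹
            ⟨j.succ, le_refl j.succ⟩ ⟨j.succ, le_refl j.succ⟩ =
        (A'.submatrix (fun i : {i : Fin N // j ≤ i} => (i : Fin N))
            (fun i : {i : Fin N // j ≤ i} => (i : Fin N)))⁻¹
            ⟨j, le_refl j⟩ ⟨j, le_refl j⟩ := by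
      intro j
      have hlt : ∀ i : {i : Fin (N+1) // j.succ ≤ i}, (i.1.val - 1) < N := by
        intro i
        have h1 : j.val + 1 ≤ i.1.val := by
          have := i.2; rw [Fin.le_def] at this; simpa using this
        have h2 := i.1.isLt
        omega
      let φ : {i : Fin N // j ≤ i} ≃ {i : Fin (N+1) // j.succ ≤ i} :=
        { toFun := fun i => ⟨i.1.succ, Fin.succ_le_succ_iff.mpr i.2⟩
          invFun := fun i => ⟨⟨i.1.val - 1, hlt i⟩, by
            have := i.2; rw [Fin.le_def] at this ⊢
            simp only [Fin.val_succ] at this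
            simp only []
            omega⟩
          left_inv := fun i => by
            apply Subtype.ext; apply Fin.ext; simp
          right_inv := fun i => by
            apply Subtype.ext; apply Fin.ext
            have h1 : j.val + 1 ≤ i.1.val := by
              have := i.2; rw [Fin.le_def] at this; simpa using this
            simp [Fin.val_succ]
            omega }
      have key : A.submatrix (fun i : {i : Fin (N+1) // j.succ ≤ i} => (i : Fin (N+1)))
            (fun i : {i : Fin (N+1) // j.succ ≤ i} => (i : Fin (N+1))) =
          reindex φ φ (A'.submatrix (fun i : {i : Fin N // j ≤ i} => (i : Fin N))
            (fun i : {i : Fin N // j ≤ i} => (i : Fin N))) := by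
        ext a b
        simp only [reindex_apply, submatrix_apply, hA']
        congr 1
        · conv_lhs => rw [← φ.apply_symm_apply a]
          rfl
        · conv_lhs => rw [← φ.apply_symm_apply b]
          rfl
      rw [key, Matrix.inv_reindex]
      have hφ : (φ.symm ⟨j.succ, le_refl j.succ⟩) = ⟨j, le_refl j⟩ := by
        apply Subtype.ext; apply Fin.ext; simp [φ]
      simp [reindex_apply, hφ]
    calc A.det⁻¹ = (A.det⁻¹ * A'.det) * (A'.det)⁻¹ := by
          field_simp
      _ = A⁻¹ 0 0 * ∏ j : Fin N,
            ((A'.submatrix (fun i : {i : Fin N // j ≤ i} => (i : Fin N))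
              (fun i : {i : Fin N // j ≤ i} => (i : Fin N)))⁻¹ ⟨j, le_refl j⟩ ⟨j, le_refl j⟩) := by
          rw [hinv00, IH A' (fun m _ _ e he => by
            rw [hA', Matrix.submatrix_submatrix]
            exact h m (Fin.succ ∘ e) ((Fin.succ_injective N).comp he))]
      _ = _ := by
          congr 1
          exact (Finset.prod_congr rfl fun j _ => (hsucc j).symm)

open Matrix Function Filter Topology

attribute [local instance] Matrix.linftyOpNormedRing Matrix.linftyOpNormedAlgebra

lemma entry_le_linfty {N : ℕ} (M : Matrix (Fin N) (Fin N) ℂ) (i j : Fin N) :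
    ‖M i j‖ ≤ ‖M‖ := by
  have h : ‖M i j‖₊ ≤ ‖M‖₊ := by
    rw [Matrix.linfty_opNNNorm_def]
    refine le_trans ?_ (Finset.le_sup (f := fun i => ∑ k, ‖M i k‖₊) (Finset.mem_univ i))
    exact Finset.single_le_sum (f := fun k => ‖M i k‖₊) (fun k _ => zero_le)
      (Finset.mem_univ j)
  exact_mod_cast h

lemma pow_entry_tendsto_zero {N : ℕ} (B : Matrix (Fin N) (Fin N) ℂ)
    (hB : spectralRadius ℂ B < 1) (i j : Fin N) :
    Tendsto (fun n : ℕ => ‖(B ^ n) i j‖) atTop (𝓝 0) := by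
  obtain ⟨c, hc1, hc2⟩ := exists_between hB
  lift c to NNReal using (hc2.trans_le le_top).ne
  have hgel := spectrum.pow_nnnorm_pow_one_div_tendsto_nhds_spectralRadius B
  have hev : ∀ᶠ n : ℕ in atTop, (‖B ^ n‖₊ : ENNReal) ^ (1 / (n:ℝ)) < (c : ENNReal) :=
    hgel.eventually_lt_const hc1
  have hev2 : ∀ᶠ n : ℕ in atTop, ‖B ^ n‖ ≤ (c:ℝ) ^ n := by
    filter_upwards [hev, eventually_ge_atTop 1] with n hn hn1
    have hne : (n : ℝ) ≠ 0 := by positivity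
    have h1 : (‖B ^ n‖₊ : ENNReal) ≤ ((c ^ n : NNReal) : ENNReal) := by
      calc (‖B ^ n‖₊ : ENNReal)
          = ((‖B ^ n‖₊ : ENNReal) ^ (1/(n:ℝ))) ^ (n:ℝ) := by
            rw [← ENNReal.rpow_mul, one_div, inv_mul_cancel₀ hne, ENNReal.rpow_one]
        _ ≤ (c : ENNReal) ^ (n:ℝ) := ENNReal.rpow_le_rpow hn.le (by positivity)
        _ = ((c ^ n : NNReal) : ENNReal) := by
            rw [ENNReal.rpow_natCast, ENNReal.coe_pow]
    rw [ENNReal.coe_le_coe] at h1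
    calc ‖B ^ n‖ = (‖B ^ n‖₊ : ℝ) := rfl
      _ ≤ ((c ^ n : NNReal) : ℝ) := by exact_mod_cast h1
      _ = (c:ℝ) ^ n := by push_cast; ring
  have hc1' : (c : ℝ) < 1 := by exact_mod_cast hc2
  have hto : Tendsto (fun n : ℕ => (c:ℝ) ^ n) atTop (𝓝 0) :=
    tendsto_pow_atTop_nhds_zero_of_lt_one c.2 hc1'
  refine squeeze_zero' (Eventually.of_forall fun n => norm_nonneg _) ?_ hto
  filter_upwards [hev2] with n hn
  exact le_trans (entry_le_linfty (B ^ n) i j) hn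

lemma det_one_sub_submatrix_ne_zero {N : ℕ} (Q : Matrix (Fin N) (Fin N) ℂ)
    (hQ : spectralRadius ℂ (Matrix.of fun i j => (‖Q i j‖ : ℂ)) < 1)
    (m : Type) [Fintype m] [DecidableEq m] (e : m → Fin N) (he : Function.Injective e) :
    ((1 : Matrix m m ℂ) - Q.submatrix e e).det ≠ 0 := by
  intro hdet
  obtain ⟨v, hv0, hv⟩ := (Matrix.exists_mulVec_eq_zero_iff).mpr hdet
  have hSv : Q.submatrix e e *ᵥ v = v := by
    have h' := hv
    rw [sub_mulVec, one_mulVec, sub_eq_zero] at h'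
    exact h'.symm
  set A : Matrix (Fin N) (Fin N) ℝ := Matrix.of fun i j => ‖Q i j‖ with hA
  set B : Matrix (Fin N) (Fin N) ℂ :=
    Matrix.of fun i j => (‖Q i j‖ : ℂ) with hB
  have hBA : B = A.map Complex.ofReal := by ext i j; simp [hA, hB, Matrix.map_apply]
  have hpow : ∀ n : ℕ, (B ^ n) = (A ^ n).map Complex.ofReal := by
    intro n
    rw [hBA]
    have := map_pow (Complex.ofRealHom.mapMatrix) A n
    exact this.symm
  set w : Fin N → ℝ := fun i => ‖Function.extend e v 0 i‖ with hw
  have hw0 : ∀ i, 0 ≤ w i := fun i => norm_nonneg _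
  have hwe : ∀ a, w (e a) = ‖v a‖ := by
    intro a; rw [hw]; simp [he.extend_apply]
  have hAnonneg : ∀ i j, 0 ≤ A i j := by
    intro i j
    show (0:ℝ) ≤ ‖Q i j‖
    exact norm_nonneg _
  have step : ∀ i, w i ≤ ∑ j, A i j * w j := by
    intro i
    by_cases hi : ∃ a, e a = i
    · obtain ⟨a, rfl⟩ := hi
      rw [hwe a]
      have h1 : ‖v a‖ = ‖∑ b, Q (e a) (e b) * v b‖ := by
        conv_lhs => rw [← hSv]
        rfl
      rw [h1]
      calc ‖∑ b, Q (e a) (e b) * v b‖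
          ≤ ∑ b, ‖Q (e a) (e b)‖ * ‖v b‖ := by
            refine le_trans (norm_sum_le _ _) ?_
            exact le_of_eq (Finset.sum_congr rfl fun b _ => norm_mul _ _)
        _ = ∑ b, A (e a) (e b) * w (e b) := by
            refine Finset.sum_congr rfl fun b _ => ?_
            rw [hwe b]; rfl
        _ = ∑ j ∈ Finset.univ.image e, A (e a) j * w j := by
            rw [Finset.sum_image (fun x _ y _ h => he h)]
        _ ≤ ∑ j, A (e a) j * w j := by
            refine Finset.sum_le_sum_of_subset_of_nonneg (Finset.subset_univ _) ?_
            intro j _ _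
            exact mul_nonneg (hAnonneg _ j) (hw0 j)
    · have : w i = 0 := by
        rw [hw]; simp [Function.extend_apply' _ _ _ hi]
      rw [this]
      exact Finset.sum_nonneg fun j _ =>
        mul_nonneg (hAnonneg i j) (hw0 j)
  have iter : ∀ (n : ℕ) (i : Fin N), w i ≤ ((A ^ n) *ᵥ w) i := by
    intro n
    induction n with
    | zero => intro i; simp [Matrix.one_mulVec]
    | succ n IH =>
      intro i
      have h1 : w i ≤ (A *ᵥ w) i := step i
      have h2 : (A *ᵥ w) i ≤ (A *ᵥ ((A ^ n) *ᵥ w)) i := by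
        simp only [Matrix.mulVec, dotProduct]
        exact Finset.sum_le_sum fun j _ =>
          mul_le_mul_of_nonneg_left (IH j) (hAnonneg i j)
      have h3 : A *ᵥ ((A ^ n) *ᵥ w) = (A ^ (n+1)) *ᵥ w := by
        rw [Matrix.mulVec_mulVec, ← pow_succ']
      exact le_trans h1 (h3 ▸ h2)
  have htend : ∀ i : Fin N, Tendsto (fun n : ℕ => ((A ^ n) *ᵥ w) i) atTop (𝓝 0) := by
    intro i
    have : ∀ n, ((A ^ n) *ᵥ w) i = ∑ j, (A ^ n) i j * w j := fun n => rfl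
    simp only [this]
    have : Tendsto (fun n : ℕ => ∑ j, (A ^ n) i j * w j) atTop (𝓝 (∑ j : Fin N, 0 * w j)) := by
      refine tendsto_finset_sum _ fun j _ => Tendsto.mul_const (w j) ?_
      have habs : ∀ n : ℕ, |(A ^ n) i j| = ‖(B ^ n) i j‖ := by
        intro n
        rw [hpow n, Matrix.map_apply, Complex.norm_real, Real.norm_eq_abs]
      have := pow_entry_tendsto_zero B hQ i j
      have h2 : Tendsto (fun n : ℕ => |(A ^ n) i j|) atTop (𝓝 0) := by
        simpa [habs] using this
      exact (tendsto_zero_iff_abs_tendsto_zero (fun n : ℕ => (A ^ n) i j)).mpr h2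
    simpa using this
  have hwzero : ∀ i, w i = 0 := by
    intro i
    have h1 : w i ≤ 0 := ge_of_tendsto' (htend i) (fun n => iter n i)
    exact le_antisymm h1 (hw0 i)
  apply hv0
  funext a
  have := hwzero (e a)
  rw [hwe a] at this
  simpa using this

/-- Determinant of the Green's function as a product of Green's functions of nested
subgraphs: if `ρ(|Q|) < 1`, `G = (I − Q)⁻¹` and `G_k = (I − Q_k)⁻¹` where `Q_k` is `Q`
restricted to indices `≥ k`, then `det G = ∏_k G_k(k,k)`. -/
theorem det_green_product (N : ℕ) (Q : Matrix (Fin N) (Fin N) ℂ)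
    (hQ : spectralRadius ℂ (Matrix.of fun i j => (‖Q i j‖ : ℂ)) < 1) :
    Matrix.det (1 - Q)⁻¹ =
      ∏ k : Fin N,
        ((1 - Q.submatrix (fun j : {j : Fin N // k ≤ j} => (j : Fin N))
            (fun j : {j : Fin N // k ≤ j} => (j : Fin N)))⁻¹
          ⟨k, le_refl k⟩ ⟨k, le_refl k⟩) := by
  have hsub : ∀ (m : Type) [Fintype m] [DecidableEq m] (e : m → Fin N),
      Function.Injective e → ((1 - Q).submatrix e e) = 1 - Q.submatrix e e := by
    intro m _ _ e he
    ext i j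
    simp [Matrix.submatrix_apply, Matrix.sub_apply, Matrix.one_apply, he.eq_iff]
  have h : ∀ (m : Type) [Fintype m] [DecidableEq m] (e : m → Fin N),
      Function.Injective e → (((1 - Q).submatrix e e)).det ≠ 0 := by
    intro m _ _ e he
    rw [hsub m e he]
    exact det_one_sub_submatrix_ne_zero Q hQ m e he
  have hmain := aux_ind N (1 - Q) h
  have hd : Matrix.det (1 - Q)⁻¹ = (Matrix.det (1 - Q))⁻¹ := by
    rw [Matrix.det_nonsing_inv, Ring.inverse_eq_inv']
  rw [hd, hmain]
  refine Finset.prod_congr rfl fun k _ => ?_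
  rw [hsub {j : Fin N // k ≤ j} (fun j => (j : Fin N)) (fun a b hab => Subtype.ext hab)]
end

section
/- Let C be an N×N current (matrix of naturals with balanced row and column sums at each index), let x be a fixed vertex with U = V \ {x}. For a current C⁺ supported on loops through x, let W(C⁺) denote the number of rooted loops ω based at x with edge local times c_{uv}(ω) = C⁺_{uv} for all u,v. Then ∏_{u∈V} multinomial(n_u(C); (C_{uv})_{v∈V}) = Σ_{(C⁺, C⁰)} W(C⁺) · ∏_{u∈U} multinomial(n_u(C⁰); (C⁰_{uv})_{v∈U}), where the sum is over pairs with C⁺ a current on V, C⁰ a current on U (i.e., C⁰_{uv} = 0 if u = x or v = x), and C⁺ + C⁰ = C. -/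
open scoped BigOperators

open List Finset

set_option linter.unusedSectionVars false
set_option maxHeartbeats 1000000

namespace LoopDecomp

variable {V : Type*} [DecidableEq V]

lemma length_eq_sum_count {α : Type*} [BEq α] [LawfulBEq α] [DecidableEq α] [Fintype α]
    (l : List α) : l.length = ∑ a, l.count a := by
  induction l with
  | nil => simp
  | cons h t ih =>
      simp only [List.length_cons, List.count_cons, ih, beq_iff_eq]
      rw [Finset.sum_add_distrib]
      simp [Finset.sum_ite_eq', add_comm]

lemma eq_nil_of_count_eq_zero [Fintype V] {l : List V} (h : ∀ a, l.count a = 0) : l = [] := by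
  have := length_eq_sum_count l
  simp only [h, Finset.sum_const_zero] at this
  exact List.length_eq_zero_iff.mp this

lemma map_fst_zip_tail (ω : List V) : (ω.zip ω.tail).map Prod.fst = ω.dropLast := by
  induction ω with
  | nil => simp
  | cons a t ih =>
      cases t with
      | nil => simp
      | cons b s =>
          simp only [List.tail_cons] at ih ⊢
          rw [List.zip_cons_cons, List.map_cons, ih]
          simp

lemma map_snd_zip_tail (ω : List V) : (ω.zip ω.tail).map Prod.snd = ω.tail := by
  cases ω with
  | nil => simp
  | cons a t =>
      simp only [List.tail_cons]
      exact List.map_snd_zip (by simp)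

lemma count_pair_cons (p q : V × V) (t : List (V × V)) :
    (p :: t).count q = t.count q + (if q = p then 1 else 0) := by
  rw [List.count_cons]
  congr 1
  simp only [beq_iff_eq]
  exact if_congr eq_comm rfl rfl

lemma sum_count_fst [Fintype V] (L : List (V × V)) (a : V) :
    ∑ b, L.count (a, b) = (L.map Prod.fst).count a := by
  induction L with
  | nil => simp
  | cons p t ih =>
      simp only [List.map_cons]
      rw [Finset.sum_congr rfl (fun b _ => count_pair_cons p (a, b) t),
        Finset.sum_add_distrib, ih, List.count_cons]
      congr 1
      rcases p with ⟨p1, p2⟩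
      by_cases h : p1 = a
      · subst h
        rw [Finset.sum_eq_single p2] <;> simp +contextual [Prod.ext_iff, eq_comm]
      · rw [Finset.sum_eq_zero] <;> simp +contextual [Prod.ext_iff, h, Ne.symm h]

lemma sum_count_snd [Fintype V] (L : List (V × V)) (a : V) :
    ∑ b, L.count (b, a) = (L.map Prod.snd).count a := by
  induction L with
  | nil => simp
  | cons p t ih =>
      simp only [List.map_cons]
      rw [Finset.sum_congr rfl (fun b _ => count_pair_cons p (b, a) t),
        Finset.sum_add_distrib, ih, List.count_cons]
      congr 1
      rcases p with ⟨p1, p2⟩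
      by_cases h : p2 = a
      · subst h
        rw [Finset.sum_eq_single p1] <;> simp +contextual [Prod.ext_iff, eq_comm]
      · rw [Finset.sum_eq_zero] <;> simp +contextual [Prod.ext_iff, h, Ne.symm h]

lemma count_eq_dropLast (l : List V) (hl : l ≠ []) (a : V) :
    l.count a = l.dropLast.count a + (if l.getLast? = some a then 1 else 0) := by
  conv_lhs => rw [← List.dropLast_append_getLast hl]
  rw [List.count_append, List.getLast?_eq_getLast hl]
  simp [List.count_singleton', eq_comm]

lemma count_eq_tail (l : List V) (a : V) :
    l.count a = (if l.head? = some a then 1 else 0) + l.tail.count a := by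
  cases l with
  | nil => simp
  | cons h t =>
      rw [List.count_cons, add_comm]
      congr 1
      simp only [List.head?_cons, Option.some.injEq, beq_iff_eq]

lemma finite_count_lists [Fintype V] (m : V → ℕ) :
    Finite {l : List V // ∀ b, l.count b = m b} := by
  have hsub : {l : List V | ∀ b, l.count b = m b} ⊆ {l : List V | l.length = ∑ b, m b} := by
    intro l hl
    simp only [Set.mem_setOf_eq] at hl ⊢
    rw [length_eq_sum_count l]
    exact Finset.sum_congr rfl fun b _ => hl b
  exact ((List.finite_length_eq V _).subset hsub).to_subtype

lemma nat_card_sigma {ι : Type*} [Fintype ι] (β : ι → Type*) [h : ∀ i, Finite (β i)] :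
    Nat.card (Σ i, β i) = ∑ i, Nat.card (β i) := by
  haveI : ∀ i, Fintype (β i) := fun i => Fintype.ofFinite (β i)
  simp [Nat.card_eq_fintype_card]

lemma multinomial_rec [Fintype V] (m : V → ℕ) (n : ℕ) (h : ∑ b, m b = n + 1) :
    Nat.multinomial Finset.univ m =
      ∑ b, if 0 < m b then Nat.multinomial Finset.univ (Function.update m b (m b - 1)) else 0 := by
  set P := ∏ b, Nat.factorial (m b) with hP
  have hPpos : 0 < P := Finset.prod_pos fun b _ => Nat.factorial_pos _
  have key : ∀ b, 0 < m b →
      P * Nat.multinomial Finset.univ (Function.update m b (m b - 1)) = m b * n.factorial := by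
    intro b hb
    set m' := Function.update m b (m b - 1) with hm'
    have hsum' : ∑ a, m' a = n := by
      rw [Finset.sum_update_of_mem (Finset.mem_univ b), Finset.sdiff_singleton_eq_erase]
      have := Finset.add_sum_erase Finset.univ m (Finset.mem_univ b)
      omega
    have hprod : P = m b * ∏ a, (m' a).factorial := by
      have h1 : ∀ a, (m' a).factorial = Function.update (fun a => (m a).factorial) b ((m b - 1).factorial) a := by
        intro a
        exact Function.apply_update (fun _ k => Nat.factorial k) m b (m b - 1) a
      rw [Finset.prod_congr rfl fun a _ => h1 a,
        Finset.prod_update_of_mem (Finset.mem_univ b), hP,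
        ← Finset.mul_prod_erase Finset.univ (fun a => (m a).factorial) (Finset.mem_univ b)]
      rw [← mul_assoc, Finset.sdiff_singleton_eq_erase]
      congr 1
      rw [← Nat.succ_pred_eq_of_pos hb, Nat.factorial_succ]
      simp [Nat.succ_pred_eq_of_pos hb]
    rw [hprod, mul_assoc, Nat.multinomial_spec, hsum']
  have lhs : P * Nat.multinomial Finset.univ m = (n + 1).factorial := by
    rw [hP, Nat.multinomial_spec, h]
  have rhs : P * (∑ b, if 0 < m b then
      Nat.multinomial Finset.univ (Function.update m b (m b - 1)) else 0) = (n + 1).factorial := by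
    rw [Finset.mul_sum]
    have : ∀ b ∈ Finset.univ, P * (if 0 < m b then
        Nat.multinomial Finset.univ (Function.update m b (m b - 1)) else 0) = m b * n.factorial := by
      intro b _
      by_cases hb : 0 < m b
      · rw [if_pos hb, key b hb]
      · rw [if_neg hb]
        have : m b = 0 := by omega
        simp [this]
    rw [Finset.sum_congr rfl this, ← Finset.sum_mul, h, Nat.factorial_succ]
  exact Nat.eq_of_mul_eq_mul_left hPpos (lhs.trans rhs.symm)

lemma sum_update_pred [Fintype V] (m : V → ℕ) (b : V) (hb : 0 < m b) (n : ℕ)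
    (hm : ∑ a, m a = n + 1) : ∑ a, Function.update m b (m b - 1) a = n := by
  rw [Finset.sum_update_of_mem (Finset.mem_univ b), Finset.sdiff_singleton_eq_erase]
  have := Finset.add_sum_erase Finset.univ m (Finset.mem_univ b)
  omega

lemma card_count_lists [Fintype V] : ∀ (n : ℕ) (m : V → ℕ), (∑ b, m b = n) →
    Nat.card {l : List V // ∀ b, l.count b = m b} = Nat.multinomial Finset.univ m := by
  intro n
  induction n with
  | zero =>
      intro m hm
      have hm0 : ∀ b, m b = 0 := by
        intro b
        have : m b ≤ ∑ b, m b := Finset.single_le_sum (fun _ _ => Nat.zero_le _) (Finset.mem_univ b)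
        omega
      haveI : Unique {l : List V // ∀ b, l.count b = m b} := by
        refine ⟨⟨⟨[], fun b => by simp [hm0 b]⟩⟩, ?_⟩
        rintro ⟨l, hl⟩
        ext : 1
        exact eq_nil_of_count_eq_zero (fun a => by rw [hl a, hm0 a])
      rw [Nat.card_unique]
      have hspec := Nat.multinomial_spec Finset.univ m
      rw [hm] at hspec
      have h1 : ∏ b, (m b).factorial = 1 := Finset.prod_eq_one fun b _ => by simp [hm0 b]
      rw [h1, one_mul] at hspec
      simp [hspec]
  | succ n ih =>
      intro m hm
      haveI : ∀ q : {b : V // 0 < m b},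
          Finite {l : List V // ∀ a, l.count a = Function.update m q.1 (m q.1 - 1) a} :=
        fun q => finite_count_lists _
      set Ψ : (Σ b : {b : V // 0 < m b},
          {l : List V // ∀ a, l.count a = Function.update m b.1 (m b.1 - 1) a}) →
          {l : List V // ∀ b, l.count b = m b} :=
        fun q => ⟨q.1.1 :: q.2.1, by
          intro a
          rw [List.count_cons, q.2.2 a]
          by_cases ha : a = q.1.1
          · subst ha
            simp only [Function.update_self, beq_self_eq_true, if_pos]
            have := q.1.2
            omega
          · simp [Function.update_of_ne ha, ha, Ne.symm ha]⟩ with hΨ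
      have hbij : Function.Bijective Ψ := by
        constructor
        · rintro ⟨⟨b, hb⟩, ⟨l, hl⟩⟩ ⟨⟨b', hb'⟩, ⟨l', hl'⟩⟩ h
          simp only [hΨ, Subtype.mk.injEq, List.cons.injEq] at h
          obtain ⟨h1, h2⟩ := h
          subst h1
          subst h2
          rfl
        · rintro ⟨l, hl⟩
          have hne : l ≠ [] := by
            intro h0
            rw [h0] at hl
            have : (0:ℕ) + 1 ≤ n + 1 := by omega
            rw [← hm] at this
            simp only [← hl, List.count_nil, Finset.sum_const_zero] at this
            omega
          rcases l with _ | ⟨h, t⟩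
          · exact absurd rfl hne
          · have hb : 0 < m h := by
              rw [← hl h]
              simp [List.count_cons]
            refine ⟨⟨⟨h, hb⟩, ⟨t, ?_⟩⟩, rfl⟩
            intro a
            have := hl a
            rw [List.count_cons] at this
            by_cases ha : a = h
            · subst ha
              simp only [Function.update_self]
              simp only [beq_self_eq_true, if_pos] at this
              omega
            · rw [Function.update_of_ne ha]
              simpa [Ne.symm ha] using this
      rw [← Nat.card_congr (Equiv.ofBijective Ψ hbij), nat_card_sigma]
      have hterm : ∀ q : {b : V // 0 < m b},
          Nat.card {l : List V // ∀ a, l.count a = Function.update m q.1 (m q.1 - 1) a} =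
            Nat.multinomial Finset.univ (Function.update m q.1 (m q.1 - 1)) :=
        fun q => ih _ (sum_update_pred m q.1 q.2 n hm)
      rw [Finset.sum_congr rfl (fun q _ => hterm q), multinomial_rec m n hm,
        ← Finset.sum_filter]
      have hsub := Finset.sum_subtype (p := fun b => 0 < m b) (F := inferInstance)
        (s := Finset.univ.filter fun b => 0 < m b)
        (f := fun b => Nat.multinomial Finset.univ (Function.update m b (m b - 1))) (by simp)
      rw [hsub]

/-- exit sequence of a walk at a vertex -/
def exits (ω : List V) (a : V) : List V :=
  (ω.zip ω.tail).filterMap (fun p => if p.1 = a then some p.2 else none)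

lemma count_filterMap_pairs (L : List (V × V)) (a b : V) :
    (L.filterMap (fun p => if p.1 = a then some p.2 else none)).count b = L.count (a, b) := by
  induction L with
  | nil => simp
  | cons p t ih =>
      rcases p with ⟨p1, p2⟩
      by_cases h : p1 = a
      · subst h
        rw [show (List.filterMap (fun (p : V × V) => if p.1 = p1 then some p.2 else none)
              ((p1, p2) :: t)) = p2 :: List.filterMap
                (fun (p : V × V) => if p.1 = p1 then some p.2 else none) t
            from by simp [List.filterMap_cons],
          List.count_cons, List.count_cons, ih]
        congr 1
        simp [Prod.ext_iff]
      · rw [show (List.filterMap (fun (p : V × V) => if p.1 = a then some p.2 else none)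
              ((p1, p2) :: t)) = List.filterMap
                (fun (p : V × V) => if p.1 = a then some p.2 else none) t
            from by simp [List.filterMap_cons, h],
          ih, List.count_cons]
        have hne : ¬ ((a, b) = (p1, p2)) := by
          simp only [Prod.mk.injEq, not_and]
          intro h'
          exact absurd h'.symm h
        have hfalse : ¬ (((a, b) == (p1, p2)) = true) := by
          simp only [beq_iff_eq]
          exact hne
        simp [hfalse]
        exact fun h' => absurd h' h

lemma count_exits (ω : List V) (a b : V) :
    (exits ω a).count b = (ω.zip ω.tail).count (a, b) := count_filterMap_pairs _ a b

lemma exits_singleton (u a : V) : exits [u] a = [] := rfl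

lemma exits_cons_cons (u v : V) (t : List V) (a : V) :
    exits (u :: v :: t) (a) = (if u = a then [v] else []) ++ exits (v :: t) a := by
  simp only [exits, List.tail_cons, List.zip_cons_cons, List.filterMap_cons]
  by_cases h : u = a <;> simp [h]

lemma length_exits_sum [Fintype V] (ω : List V) :
    ∑ a, (exits ω a).length = (ω.zip ω.tail).length := by
  have h1 : ∀ a, (exits ω a).length = ∑ b, (ω.zip ω.tail).count (a, b) := by
    intro a
    rw [length_eq_sum_count (exits ω a)]
    exact Finset.sum_congr rfl fun b _ => count_exits ω a b
  rw [Finset.sum_congr rfl fun a _ => h1 a]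
  rw [length_eq_sum_count (ω.zip ω.tail), Fintype.sum_prod_type]

/-- total size of a stack family -/
def tsize [Fintype V] (f : V → List V) : ℕ := ∑ a, (f a).length

lemma tsize_exits_add [Fintype V] (ω : List V) (g : V → List V) :
    tsize (fun a => exits ω a ++ g a) = (ω.zip ω.tail).length + tsize g := by
  unfold tsize
  simp only [List.length_append]
  rw [Finset.sum_add_distrib, length_exits_sum]

/-- the stack walk -/
def walk : ℕ → V → (V → List V) → List V × (V → List V)
  | 0, u, f => ([u], f)
  | n+1, u, f =>
    match f u with
    | [] => ([u], f)
    | v :: t =>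
      let r := walk n v (Function.update f u t)
      (u :: r.1, r.2)

lemma walk_succ_nil (n : ℕ) (u : V) (f : V → List V) (h : f u = []) :
    walk (n + 1) u f = ([u], f) := by
  simp only [walk, h]

lemma walk_succ_cons (n : ℕ) (u : V) (f : V → List V) (v : V) (t : List V) (h : f u = v :: t) :
    walk (n + 1) u f =
      ((walk n v (Function.update f u t)).1.cons u, (walk n v (Function.update f u t)).2) := by
  simp only [walk, h]

lemma tsize_update [Fintype V] (f : V → List V) (u : V) (t : List V) :
    tsize (Function.update f u t) = t.length + ∑ a ∈ Finset.univ.erase u, (f a).length := by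
  unfold tsize
  have h1 : ∀ a, (Function.update f u t a).length =
      Function.update (fun a => (f a).length) u t.length a := fun a =>
    Function.apply_update (fun _ l => List.length l) f u t a
  rw [Finset.sum_congr rfl fun a _ => h1 a,
    Finset.sum_update_of_mem (Finset.mem_univ u), Finset.sdiff_singleton_eq_erase]

lemma walk_spec [Fintype V] : ∀ (n : ℕ) (u : V) (f : V → List V), tsize f ≤ n →
    (walk n u f).1.head? = some u ∧
    (∃ w, (walk n u f).1.getLast? = some w ∧ (walk n u f).2 w = []) ∧
    (∀ a, f a = exits (walk n u f).1 a ++ (walk n u f).2 a) := by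
  intro n
  induction n with
  | zero =>
      intro u f hf
      have hnil : ∀ a, f a = [] := by
        intro a
        have : (f a).length ≤ tsize f :=
          Finset.single_le_sum (f := fun a => (f a).length) (fun _ _ => Nat.zero_le _)
            (Finset.mem_univ a)
        have : (f a).length = 0 := by omega
        exact List.length_eq_zero_iff.mp this
      refine ⟨rfl, ⟨u, rfl, hnil u⟩, fun a => by simp [walk, exits_singleton, hnil a]⟩
  | succ n ih =>
      intro u f hf
      rcases h : f u with _ | ⟨v, t⟩
      · rw [walk_succ_nil n u f h]
        exact ⟨rfl, ⟨u, rfl, h⟩, fun a => by simp [exits_singleton]⟩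
      · rw [walk_succ_cons n u f v t h]
        have hts : tsize (Function.update f u t) ≤ n := by
          rw [tsize_update]
          have h2 := Finset.add_sum_erase Finset.univ (fun a => (f a).length) (Finset.mem_univ u)
          have h3 : (f u).length = t.length + 1 := by rw [h]; rfl
          unfold tsize at hf
          omega
        obtain ⟨ih1, ⟨w, ih2, ih2'⟩, ih3⟩ := ih v (Function.update f u t) hts
        set ω' := (walk n v (Function.update f u t)).1 with hω'
        set g := (walk n v (Function.update f u t)).2 with hg
        obtain ⟨rest, hrest⟩ : ∃ rest, ω' = v :: rest := by
          cases hc : ω' with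
          | nil => rw [hc] at ih1; simp at ih1
          | cons a s =>
              rw [hc] at ih1
              simp only [List.head?_cons, Option.some.injEq] at ih1
              exact ⟨s, by rw [ih1]⟩
        constructor
        · simp
        constructor
        · refine ⟨w, ?_, ih2'⟩
          rw [hrest] at ih2 ⊢
          simpa [List.getLast?_cons_cons] using ih2
        · intro a
          have hx : exits (u :: ω') a = (if u = a then [v] else []) ++ exits ω' a := by
            rw [hrest]
            exact exits_cons_cons u v rest a
          rw [show ((ω'.cons u)) = u :: ω' from rfl, hx]
          by_cases ha : a = u
          · subst ha
            rw [if_pos rfl, h]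
            have := ih3 a
            rw [Function.update_self] at this
            rw [this]
            simp
          · rw [if_neg (Ne.symm ha)]
            have := ih3 a
            rw [Function.update_of_ne ha] at this
            simpa using this

lemma walk_reconstruct [Fintype V] (x : V) : ∀ (ω : List V) (v : V) (g : V → List V) (n : ℕ),
    ω.head? = some v → ω.getLast? = some x → g x = [] →
    tsize (fun a => exits ω a ++ g a) ≤ n →
    walk n v (fun a => exits ω a ++ g a) = (ω, g) := by
  intro ω
  induction ω with
  | nil => intro v g n h1; simp at h1
  | cons w ω' ih =>
      intro v g n h1 h2 hgx hn
      simp only [List.head?_cons, Option.some.injEq] at h1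
      subst h1
      rcases ω' with _ | ⟨w', t⟩
      · -- singleton: w = x
        simp only [List.getLast?_singleton, Option.some.injEq] at h2
        have hgw : g w = [] := by rw [h2]; exact hgx
        have hfg : (fun a => exits [w] a ++ g a) = g := by
          funext a
          simp [exits_singleton]
        rw [hfg]
        cases n with
        | zero => rfl
        | succ m => rw [walk_succ_nil m w g hgw]
      · -- at least two elements
        set f := fun a => exits (w :: w' :: t) a ++ g a with hf
        have hfv : f w = w' :: (exits (w' :: t) w ++ g w) := by
          rw [hf]
          simp only [exits_cons_cons, if_pos rfl]
          simp
        have hpos : 1 ≤ tsize f := by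
          have : (f w).length ≤ tsize f :=
            Finset.single_le_sum (f := fun a => (f a).length) (fun _ _ => Nat.zero_le _)
              (Finset.mem_univ w)
          rw [hfv] at this
          simp only [List.length_cons] at this
          omega
        cases n with
        | zero => omega
        | succ m =>
            rw [walk_succ_cons m w f w' (exits (w' :: t) w ++ g w) hfv]
            have hupd : Function.update f w (exits (w' :: t) w ++ g w) =
                fun a => exits (w' :: t) a ++ g a := by
              funext a
              by_cases ha : a = w
              · subst ha
                rw [Function.update_self]
              · rw [Function.update_of_ne ha, hf]
                simp only [exits_cons_cons, if_neg (show ¬ w = a from fun hh => ha hh.symm)]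
                simp
            rw [hupd]
            have hlast : (w' :: t).getLast? = some x := by
              rw [← h2]
              exact (List.getLast?_cons_cons).symm
            have hsize : tsize (fun a => exits (w' :: t) a ++ g a) ≤ m := by
              have e1 := tsize_exits_add (w :: w' :: t) g
              have e2 := tsize_exits_add (w' :: t) g
              rw [← hf] at e1
              have hz1 : ((w :: w' :: t).zip (w :: w' :: t).tail).length = t.length + 1 := by
                simp [List.length_zip]
              have hz2 : ((w' :: t).zip (w' :: t).tail).length = t.length := by
                simp [List.length_zip]
              omega
            rw [ih w' g m (by simp) hlast hgx hsize]
-- sums of edge counts along a list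
lemma sum_count_zip_fst [Fintype V] (ω : List V) (a : V) :
    ∑ b, (ω.zip ω.tail).count (a, b) = ω.dropLast.count a := by
  rw [sum_count_fst, map_fst_zip_tail]

lemma sum_count_zip_snd [Fintype V] (ω : List V) (a : V) :
    ∑ b, (ω.zip ω.tail).count (b, a) = ω.tail.count a := by
  rw [sum_count_snd, map_snd_zip_tail]

/-- balance of edge local times for a loop -/
lemma loop_balance [Fintype V] (ω : List V) (x : V) (h1 : ω.head? = some x)
    (h2 : ω.getLast? = some x) (a : V) :
    ∑ b, (ω.zip ω.tail).count (a, b) = ∑ b, (ω.zip ω.tail).count (b, a) := by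
  have hne : ω ≠ [] := by rintro rfl; simp at h1
  rw [sum_count_zip_fst, sum_count_zip_snd]
  have e1 := count_eq_dropLast ω hne a
  have e2 := count_eq_tail ω a
  rw [h1] at e2
  rw [h2] at e1
  by_cases ha : a = x
  · subst ha
    simp only [if_pos rfl] at e1 e2
    omega
  · have hxa : ¬ (some x = some a) := by simp [Ne.symm ha]
    rw [if_neg hxa] at e1 e2
    omega

/-- a walk ending at `w ≠ head` has one more entry than exit at `w` -/
lemma walk_balance_end [Fintype V] (ω : List V) (x w : V) (h1 : ω.head? = some x)
    (h2 : ω.getLast? = some w) (hwx : w ≠ x) :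
    ∑ b, (ω.zip ω.tail).count (b, w) = (∑ b, (ω.zip ω.tail).count (w, b)) + 1 := by
  have hne : ω ≠ [] := by rintro rfl; simp at h1
  rw [sum_count_zip_fst, sum_count_zip_snd]
  have e1 := count_eq_dropLast ω hne w
  have e2 := count_eq_tail ω w
  rw [h1] at e2
  rw [h2] at e1
  rw [if_pos rfl] at e1
  rw [if_neg (by simp [Ne.symm hwx] : ¬ (some x = some w))] at e2
  omega

lemma multinomial_eq_one_of_zero (s : Finset V) (f : V → ℕ) (h : ∀ b ∈ s, f b = 0) :
    Nat.multinomial s f = 1 := by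
  have hs := Nat.multinomial_spec s f
  rw [Finset.sum_eq_zero h, Finset.prod_eq_one (fun b hb => by simp [h b hb])] at hs
  simpa using hs

lemma prod_multinomial_erase [Fintype V] (x : V) (m : V → V → ℕ) (hx : ∀ b, m x b = 0)
    (hcol : ∀ u, m u x = 0) :
    ∏ u, Nat.multinomial Finset.univ (m u) =
      ∏ u ∈ Finset.univ.erase x, Nat.multinomial (Finset.univ.erase x) (m u) := by
  rw [← Finset.mul_prod_erase Finset.univ _ (Finset.mem_univ x),
    multinomial_eq_one_of_zero Finset.univ (m x) (fun b _ => hx b), one_mul]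
  refine Finset.prod_congr rfl fun u hu => ?_
  have hins : (Finset.univ : Finset V) = insert x (Finset.univ.erase x) :=
    (Finset.insert_erase (Finset.mem_univ x)).symm
  rw [hins, Nat.multinomial_insert (Finset.notMem_erase x _), hcol u]
  simp

lemma card_stk [Fintype V] (m : V → V → ℕ) :
    Nat.card {g : V → List V // ∀ a b, (g a).count b = m a b} =
      ∏ a, Nat.multinomial Finset.univ (m a) := by
  have e : {g : V → List V // ∀ a b, (g a).count b = m a b} ≃
      ∀ a, {l : List V // ∀ b, l.count b = m a b} :=
    ⟨fun g a => ⟨g.1 a, fun b => g.2 a b⟩, fun h => ⟨fun a => (h a).1, fun a b => (h a).2 b⟩,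
      fun g => rfl, fun h => rfl⟩
  haveI : ∀ a, Finite {l : List V // ∀ b, l.count b = m a b} := fun a => finite_count_lists _
  rw [Nat.card_congr e, Nat.card_pi]
  exact Finset.prod_congr rfl fun a _ => card_count_lists _ (m a) rfl

lemma finite_stk [Fintype V] (m : V → V → ℕ) :
    Finite {g : V → List V // ∀ a b, (g a).count b = m a b} := by
  have e : {g : V → List V // ∀ a b, (g a).count b = m a b} ≃
      ∀ a, {l : List V // ∀ b, l.count b = m a b} :=
    ⟨fun g a => ⟨g.1 a, fun b => g.2 a b⟩, fun h => ⟨fun a => (h a).1, fun a b => (h a).2 b⟩,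
      fun g => rfl, fun h => rfl⟩
  haveI : ∀ a, Finite {l : List V // ∀ b, l.count b = m a b} := fun a => finite_count_lists _
  exact Finite.of_equiv _ e.symm

lemma finite_loop [Fintype V] (x : V) (q : Matrix V V ℕ) :
    Finite {ω : List V // ω.head? = some x ∧ ω.getLast? = some x ∧
      ∀ u v, (ω.zip ω.tail).count (u, v) = q u v} := by
  set n := (∑ p : V × V, q p.1 p.2) + 1 with hn
  have hlen : ∀ ω : List V, ω.head? = some x →
      (∀ u v, (ω.zip ω.tail).count (u, v) = q u v) → ω.length = n := by
    intro ω h1 h3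
    have hne : ω ≠ [] := by rintro rfl; simp at h1
    have hz : (ω.zip ω.tail).length = ∑ p : V × V, q p.1 p.2 := by
      rw [length_eq_sum_count (ω.zip ω.tail)]
      exact Finset.sum_congr rfl fun p _ => by rw [← h3 p.1 p.2]
    have : (ω.zip ω.tail).length = ω.length - 1 := by
      rw [List.length_zip, List.length_tail]
      omega
    have hpos : 0 < ω.length := List.length_pos_iff.mpr hne
    omega
  have hinj : Function.Injective (fun ω : {ω : List V // ω.head? = some x ∧ ω.getLast? = some x ∧
      ∀ u v, (ω.zip ω.tail).count (u, v) = q u v} =>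
      (⟨ω.1, hlen ω.1 ω.2.1 ω.2.2.2⟩ : {l : List V // l.length = n})) := by
    intro a b h
    simp only [Subtype.mk.injEq] at h
    exact Subtype.ext h
  haveI : Finite {l : List V // l.length = n} := (List.finite_length_eq V n).to_subtype
  exact Finite.of_injective _ hinj

lemma finite_idx [Fintype V] (C : Matrix V V ℕ) (x : V) :
    Finite {p : Matrix V V ℕ × Matrix V V ℕ //
        (∀ u, ∑ v, p.1 u v = ∑ v, p.1 v u) ∧
        (∀ u, ∑ v, p.2 u v = ∑ v, p.2 v u) ∧
        (∀ v, p.2 x v = 0) ∧ (∀ u, p.2 u x = 0) ∧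
        p.1 + p.2 = C} := by
  have hle : ∀ p : {p : Matrix V V ℕ × Matrix V V ℕ //
      (∀ u, ∑ v, p.1 u v = ∑ v, p.1 v u) ∧
      (∀ u, ∑ v, p.2 u v = ∑ v, p.2 v u) ∧
      (∀ v, p.2 x v = 0) ∧ (∀ u, p.2 u x = 0) ∧
      p.1 + p.2 = C}, ∀ u v, p.1.1 u v < C u v + 1 := by
    rintro ⟨⟨q, m⟩, h⟩ u v
    have := congrFun (congrFun h.2.2.2.2 u) v
    simp only [Matrix.add_apply] at this
    show q u v < C u v + 1
    omega
  have hinj : Function.Injective (fun p : {p : Matrix V V ℕ × Matrix V V ℕ //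
      (∀ u, ∑ v, p.1 u v = ∑ v, p.1 v u) ∧
      (∀ u, ∑ v, p.2 u v = ∑ v, p.2 v u) ∧
      (∀ v, p.2 x v = 0) ∧ (∀ u, p.2 u x = 0) ∧
      p.1 + p.2 = C} => (fun u v => (⟨p.1.1 u v, hle p u v⟩ : Fin (C u v + 1)))) := by
    rintro ⟨⟨q, m⟩, h⟩ ⟨⟨q', m'⟩, h'⟩ hEq
    have hq : q = q' := by
      funext u v
      have := congrFun (congrFun hEq u) v
      simpa [Fin.ext_iff] using this
    subst hq
    have hm : m = m' := by
      funext u v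
      have h12 := congrFun (congrFun (h.2.2.2.2.trans h'.2.2.2.2.symm) u) v
      simp only [Matrix.add_apply] at h12
      omega
    subst hm
    rfl
  exact Finite.of_injective _ hinj

theorem main_card [Fintype V] (C : Matrix V V ℕ) (hC : ∀ u, ∑ v, C u v = ∑ v, C v u) (x : V) :
    Nat.card {g : V → List V // ∀ a b, (g a).count b = C a b} =
      ∑ᶠ p : {p : Matrix V V ℕ × Matrix V V ℕ //
          (∀ u, ∑ v, p.1 u v = ∑ v, p.1 v u) ∧
          (∀ u, ∑ v, p.2 u v = ∑ v, p.2 v u) ∧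
          (∀ v, p.2 x v = 0) ∧ (∀ u, p.2 u x = 0) ∧
          p.1 + p.2 = C},
        Nat.card {ω : List V // ω.head? = some x ∧ ω.getLast? = some x ∧
            ∀ u v, (ω.zip ω.tail).count (u, v) = p.1.1 u v} *
          Nat.card {g : V → List V // ∀ a b, (g a).count b = p.1.2 a b} := by
  classical
  haveI hIfin : Finite {p : Matrix V V ℕ × Matrix V V ℕ //
      (∀ u, ∑ v, p.1 u v = ∑ v, p.1 v u) ∧
      (∀ u, ∑ v, p.2 u v = ∑ v, p.2 v u) ∧
      (∀ v, p.2 x v = 0) ∧ (∀ u, p.2 u x = 0) ∧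
      p.1 + p.2 = C} := finite_idx C x
  haveI := Fintype.ofFinite {p : Matrix V V ℕ × Matrix V V ℕ //
      (∀ u, ∑ v, p.1 u v = ∑ v, p.1 v u) ∧
      (∀ u, ∑ v, p.2 u v = ∑ v, p.2 v u) ∧
      (∀ v, p.2 x v = 0) ∧ (∀ u, p.2 u x = 0) ∧
      p.1 + p.2 = C}
  haveI : ∀ p : {p : Matrix V V ℕ × Matrix V V ℕ //
      (∀ u, ∑ v, p.1 u v = ∑ v, p.1 v u) ∧
      (∀ u, ∑ v, p.2 u v = ∑ v, p.2 v u) ∧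
      (∀ v, p.2 x v = 0) ∧ (∀ u, p.2 u x = 0) ∧
      p.1 + p.2 = C},
      Finite ({ω : List V // ω.head? = some x ∧ ω.getLast? = some x ∧
          ∀ u v, (ω.zip ω.tail).count (u, v) = p.1.1 u v} ×
        {g : V → List V // ∀ a b, (g a).count b = p.1.2 a b}) := by
    intro p
    haveI := finite_loop x p.1.1
    haveI := finite_stk (fun a b => p.1.2 a b)
    exact Finite.instProd
  -- the recombination map
  set Φ : (Σ p : {p : Matrix V V ℕ × Matrix V V ℕ //
      (∀ u, ∑ v, p.1 u v = ∑ v, p.1 v u) ∧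
      (∀ u, ∑ v, p.2 u v = ∑ v, p.2 v u) ∧
      (∀ v, p.2 x v = 0) ∧ (∀ u, p.2 u x = 0) ∧
      p.1 + p.2 = C},
      {ω : List V // ω.head? = some x ∧ ω.getLast? = some x ∧
          ∀ u v, (ω.zip ω.tail).count (u, v) = p.1.1 u v} ×
        {g : V → List V // ∀ a b, (g a).count b = p.1.2 a b}) →
      {g : V → List V // ∀ a b, (g a).count b = C a b} :=
    fun s => ⟨fun a => exits s.2.1.1 a ++ s.2.2.1 a, by
      intro a b
      rw [List.count_append, count_exits, s.2.1.2.2.2 a b, s.2.2.2 a b]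
      have := congrFun (congrFun s.1.2.2.2.2.2 a) b
      simpa [Matrix.add_apply] using this⟩ with hΦ
  have hbij : Function.Bijective Φ := by
    constructor
    · rintro ⟨⟨p, hp⟩, ⟨ω, hω⟩, ⟨g, hg⟩⟩ ⟨⟨p', hp'⟩, ⟨ω', hω'⟩, ⟨g', hg'⟩⟩ hEq
      simp only [hΦ, Subtype.mk.injEq] at hEq
      have hgx : g x = [] := eq_nil_of_count_eq_zero (fun b => by rw [hg x b, hp.2.2.1 b])
      have hgx' : g' x = [] := eq_nil_of_count_eq_zero (fun b => by rw [hg' x b, hp'.2.2.1 b])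
      have h1 := walk_reconstruct x ω x g (tsize (fun a => exits ω a ++ g a))
        hω.1 hω.2.1 hgx (le_refl _)
      have h2 := walk_reconstruct x ω' x g' (tsize (fun a => exits ω' a ++ g' a))
        hω'.1 hω'.2.1 hgx' (le_refl _)
      rw [← hEq] at h2
      rw [h1] at h2
      obtain ⟨hωeq, hgeq⟩ := Prod.ext_iff.mp h2
      obtain rfl : ω = ω' := hωeq
      obtain rfl : g = g' := hgeq
      obtain rfl : p = p' := by
        ext u v
        · rw [← hω.2.2 u v, ← hω'.2.2 u v]
        · rw [← hg u v, ← hg' u v]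
      rfl
    · rintro ⟨f, hf⟩
      obtain ⟨h1, ⟨w, h2, h2'⟩, h3⟩ := walk_spec (tsize f) x f (le_refl _)
      set ω := (walk (tsize f) x f).1 with hωdef
      set g := (walk (tsize f) x f).2 with hgdef
      -- decomposition of counts
      have hcnt : ∀ u v, (ω.zip ω.tail).count (u, v) + (g u).count v = C u v := by
        intro u v
        rw [← hf u v, h3 u, List.count_append, count_exits]
      have hrowsum : ∀ u, (∑ b, (ω.zip ω.tail).count (u, b)) + (∑ b, (g u).count b) =
          ∑ b, C u b := by
        intro u
        rw [← Finset.sum_add_distrib]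
        exact Finset.sum_congr rfl fun b _ => hcnt u b
      have hcolsum : ∀ u, (∑ b, (ω.zip ω.tail).count (b, u)) + (∑ b, (g b).count u) =
          ∑ b, C b u := by
        intro u
        rw [← Finset.sum_add_distrib]
        exact Finset.sum_congr rfl fun b _ => hcnt b u
      have hw : w = x := by
        by_contra hwx
        have hb := walk_balance_end ω x w h1 h2 hwx
        have hmw : ∑ b, (g w).count b = 0 :=
          Finset.sum_eq_zero fun b _ => by rw [h2']; simp
        have e1 := hrowsum w
        have e2 := hcolsum w
        have e3 := hC w
        have e4 : ∑ b, (g b).count w ≥ 0 := Nat.zero_le _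
        omega
      subst hw
      have hgx : g w = [] := h2'
      have hbal : ∀ u, ∑ b, (ω.zip ω.tail).count (u, b) = ∑ b, (ω.zip ω.tail).count (b, u) :=
        fun u => loop_balance ω w h1 h2 u
      have hrowz : ∀ b, (g w).count b = 0 := fun b => by rw [hgx]; simp
      have hcolz : ∀ u, (g u).count w = 0 := by
        have htot : ∑ b, (g b).count w = 0 := by
          have e1 := hrowsum w
          have e2 := hcolsum w
          have e3 := hC w
          have e4 : ∑ b, (g w).count b = 0 := Finset.sum_eq_zero fun b _ => hrowz b
          have e5 := hbal w
          omega
        intro u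
        have : (g u).count w ≤ ∑ b, (g b).count w :=
          Finset.single_le_sum (f := fun b => (g b).count w) (fun _ _ => Nat.zero_le _)
            (Finset.mem_univ u)
        omega
      have hbalm : ∀ u, ∑ b, (g u).count b = ∑ b, (g b).count u := by
        intro u
        have e1 := hrowsum u
        have e2 := hcolsum u
        have e3 := hC u
        have e5 := hbal u
        omega
      refine ⟨⟨⟨((fun u v => (ω.zip ω.tail).count (u, v) : Matrix V V ℕ),
          (fun a b => (g a).count b : Matrix V V ℕ)),
          ⟨hbal, hbalm, hrowz, hcolz, ?_⟩⟩,
        ⟨ω, h1, h2, fun u v => rfl⟩, ⟨g, fun a b => rfl⟩⟩, ?_⟩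
      · funext u v
        exact hcnt u v
      · apply Subtype.ext
        funext a
        exact (h3 a).symm
  rw [← Nat.card_eq_of_bijective Φ hbij, nat_card_sigma, finsum_eq_sum_of_fintype]
  exact Finset.sum_congr rfl fun p _ => Nat.card_prod _ _


end LoopDecomp

open LoopDecomp in
/-- The combinatorial identity behind the current distribution: for a current `C` on
`V` and a fixed vertex `x` with `U = V \\ {x}`,
`∏_{u∈V} multinomial(n_u(C); (C_{uv})_v) = Σ_{(C⁺,C⁰)} W(C⁺) ∏_{u∈U}
multinomial(n_u(C⁰); (C⁰_{uv})_{v∈U})`, where the sum is over pairs of currents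
`C⁺` on `V` and `C⁰` on `U` with `C⁺ + C⁰ = C`, and `W(C⁺)` is the number of rooted
loops at `x` with edge local times `C⁺`. -/
theorem multinomial_current_decomposition {V : Type*} [Fintype V] [DecidableEq V]
    (C : Matrix V V ℕ) (hC : ∀ u, ∑ v, C u v = ∑ v, C v u) (x : V) :
    ∏ u, Nat.multinomial Finset.univ (C u) =
      ∑ᶠ p : {p : Matrix V V ℕ × Matrix V V ℕ //
          (∀ u, ∑ v, p.1 u v = ∑ v, p.1 v u) ∧
          (∀ u, ∑ v, p.2 u v = ∑ v, p.2 v u) ∧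
          (∀ v, p.2 x v = 0) ∧ (∀ u, p.2 u x = 0) ∧
          p.1 + p.2 = C},
        Nat.card {ω : List V // ω.head? = some x ∧ ω.getLast? = some x ∧
            ∀ u v, (ω.zip ω.tail).count (u, v) = p.1.1 u v} *
          ∏ u ∈ Finset.univ.erase x,
            Nat.multinomial (Finset.univ.erase x) (p.1.2 u) := by
  rw [show (∏ u, Nat.multinomial Finset.univ (C u)) =
      Nat.card {g : V → List V // ∀ a b, (g a).count b = C a b}
    from (card_stk (fun a b => C a b)).symm]
  rw [main_card C hC x]
  exact finsum_congr fun p => by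
    rw [card_stk (fun a b => p.1.2 a b),
      prod_multinomial_erase x _ p.2.2.2.1 p.2.2.2.2.1]
end

section
/- Given nonnegative reals t_1, ..., t_N and a complex N×N matrix Q with entries q_{jk}, the following identity holds: (2π)^N · Σ_{C current} ∏_{j,k} (t_j t_k)^{C_{jk}/2} q_{jk}^{C_{jk}} / C_{jk}! = ∫_{[0,2π)^N} ∏_{j,k} exp( √(t_j t_k) · q_{jk} · e^{i(θ_k − θ_j)} ) dθ, where the sum is over all N×N natural-number matrices C with balanced row and column sums (Σ_j C_{jk} = Σ_j C_{kj} for all k), and both sides converge absolutely provided Σ_{j,k} √(t_j t_k) |q_{jk}| < ∞ (automatic for finite N). -/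
open MeasureTheory
open scoped Nat
set_option maxHeartbeats 1000000

theorem hasSum_pi_fin (m : ℕ) : ∀ {𝕜 : Type} [NormedField 𝕜] [CompleteSpace 𝕜]
    (f : Fin m → ℕ → 𝕜), (∀ i, Summable fun n => ‖f i n‖) →
    HasSum (fun n : Fin m → ℕ => ∏ i, f i (n i)) (∏ i, ∑' n, f i n) := by
  induction m with
  | zero =>
    intro 𝕜 _ _ f _
    have h := hasSum_single (f := fun n : Fin 0 → ℕ => ∏ i, f i (n i))
      (fun _ => 0) (fun b' hb' => absurd (Subsingleton.elim b' _) hb')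
    simpa using h
  | succ m ih =>
    intro 𝕜 _ _ f hf
    let g : (Fin m → ℕ) → 𝕜 := fun n => ∏ i, f i.succ (n i)
    have hS : HasSum (f 0) (∑' n, f 0 n) := ((hf 0).of_norm).hasSum
    have htail : HasSum g (∏ i : Fin m, ∑' n, f i.succ n) :=
      ih (fun i : Fin m => f i.succ) (fun i => hf i.succ)
    have hnormtail : Summable fun n => ‖g n‖ := by
      have h2 := ih (𝕜 := ℝ) (fun (i : Fin m) n => ‖f i.succ n‖)
        (fun i => by simpa using hf i.succ)
      have h3 := h2.summable
      simpa [g, norm_prod] using h3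
    have hsummul : Summable (fun x : ℕ × (Fin m → ℕ) => f 0 x.1 * g x.2) :=
      summable_mul_of_summable_norm (hf 0) hnormtail
    have hmul : HasSum (fun x : ℕ × (Fin m → ℕ) => f 0 x.1 * g x.2)
        ((∑' n, f 0 n) * ∏ i : Fin m, ∑' n, f i.succ n) := hS.mul htail hsummul
    rw [Fin.prod_univ_succ]
    have h4 : (fun n : Fin (m+1) → ℕ => ∏ i, f i (n i)) =
        (fun (x : ℕ × (Fin m → ℕ)) => f 0 x.1 * g x.2) ∘ (Fin.consEquiv (fun _ => ℕ)).symm := by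
      funext n
      simp [g, Fin.prod_univ_succ, Fin.tail]
    rw [h4, Equiv.hasSum_iff]
    exact hmul

theorem hasSum_pi_prod {ι : Type} [Fintype ι] {𝕜 : Type} [NormedField 𝕜] [CompleteSpace 𝕜]
    (f : ι → ℕ → 𝕜) (hf : ∀ i, Summable fun n => ‖f i n‖) :
    HasSum (fun n : ι → ℕ => ∏ i, f i (n i)) (∏ i, ∑' n, f i n) := by
  classical
  let e := Fintype.equivFin ι
  have h := hasSum_pi_fin (Fintype.card ι) (fun i => f (e.symm i)) (fun i => hf _)
  have h3 : (fun n : ι → ℕ => ∏ i, f i (n i)) =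
      (fun n : Fin (Fintype.card ι) → ℕ => ∏ i, f (e.symm i) (n i)) ∘
      (Equiv.piCongrLeft' (fun _ => ℕ) e) := by
    funext n
    exact (e.symm.prod_comp (fun j => f j (n j))).symm
  rw [h3, Equiv.hasSum_iff, ← e.symm.prod_comp (fun j => ∑' n, f j n)]
  exact h

/-- single-variable integral -/
theorem aux_int (m : ℤ) :
    ∫ x in Set.Ico (0:ℝ) (2*Real.pi), Complex.exp (Complex.I * m * x) =
      if m = 0 then ((2*Real.pi : ℝ) : ℂ) else 0 := by
  by_cases hm : m = 0
  · simp only [hm, Int.cast_zero, mul_zero, zero_mul, Complex.exp_zero, if_pos rfl]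
    rw [setIntegral_const]
    simp [Real.volume_Ico, ENNReal.toReal_ofReal Real.two_pi_pos.le, max_eq_left Real.two_pi_pos.le]
  · rw [if_neg hm]
    have hc : Complex.I * (m:ℂ) ≠ 0 := by
      simp [Complex.I_ne_zero, Int.cast_eq_zero, hm]
    have h1 : ∫ x in Set.Ico (0:ℝ) (2*Real.pi), Complex.exp (Complex.I * m * x) =
        ∫ x in (0:ℝ)..(2*Real.pi), Complex.exp ((Complex.I * m) * x) := by
      rw [intervalIntegral.integral_of_le Real.two_pi_pos.le,
        MeasureTheory.integral_Ico_eq_integral_Ioo, MeasureTheory.integral_Ioc_eq_integral_Ioo]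
    rw [h1, integral_exp_mul_complex hc]
    have h2 : Complex.I * (m:ℂ) * ((2*Real.pi : ℝ) : ℂ) = (m:ℂ) * (2 * (Real.pi:ℂ) * Complex.I) := by
      push_cast; ring
    rw [h2, Complex.exp_int_mul_two_pi_mul_I]
    simp

/-- integral over the box of a product of single-variable functions -/
theorem aux_box {N : ℕ} (g : Fin N → ℝ → ℂ) :
    ∫ θ in Set.pi Set.univ (fun _ : Fin N => Set.Ico (0:ℝ) (2*Real.pi)), ∏ u, g u (θ u) =
      ∏ u, ∫ x in Set.Ico (0:ℝ) (2*Real.pi), g u x := by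
  have hBox : MeasurableSet (Set.pi Set.univ (fun _ : Fin N => Set.Ico (0:ℝ) (2*Real.pi))) :=
    MeasurableSet.univ_pi fun _ => measurableSet_Ico
  rw [← integral_indicator hBox]
  have hind : (fun θ : Fin N → ℝ =>
      (Set.pi Set.univ (fun _ : Fin N => Set.Ico (0:ℝ) (2*Real.pi))).indicator
        (fun θ => ∏ u, g u (θ u)) θ) =
      fun θ : Fin N → ℝ => ∏ u, (Set.Ico (0:ℝ) (2*Real.pi)).indicator (g u) (θ u) := by
    funext θ
    by_cases hθ : θ ∈ Set.pi Set.univ (fun _ : Fin N => Set.Ico (0:ℝ) (2*Real.pi))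
    · rw [Set.indicator_of_mem hθ]
      exact Finset.prod_congr rfl fun u _ =>
        (Set.indicator_of_mem (hθ u (Set.mem_univ u)) _).symm
    · rw [Set.indicator_of_notMem hθ]
      have : ∃ u, θ u ∉ Set.Ico (0:ℝ) (2*Real.pi) := by
        by_contra h
        push_neg at h
        exact hθ fun u _ => h u
      obtain ⟨u, hu⟩ := this
      exact (Finset.prod_eq_zero (Finset.mem_univ u) (Set.indicator_of_notMem hu _)).symm
  rw [hind, MeasureTheory.volume_pi, MeasureTheory.integral_fintype_prod_eq_prod (f := fun (u : Fin N) (x : ℝ) =>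
    (Set.Ico (0:ℝ) (2*Real.pi)).indicator (g u) x)]
  exact Finset.prod_congr rfl fun u _ => integral_indicator measurableSet_Ico

theorem aux_expsum {N : ℕ} (C : Fin N × Fin N → ℕ) (θ : Fin N → ℝ) :
    ∏ p : Fin N × Fin N, Complex.exp (Complex.I * ((θ p.2 : ℂ) - (θ p.1 : ℂ))) ^ C p =
      ∏ u, Complex.exp (Complex.I *
        ((((∑ j, (C (j,u) : ℤ)) - ∑ j, (C (u,j) : ℤ)) : ℤ) : ℂ) * (θ u : ℂ)) := by
  have l1 : ∏ p : Fin N × Fin N, Complex.exp (Complex.I * ((θ p.2 : ℂ) - (θ p.1 : ℂ))) ^ C p =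
      Complex.exp (∑ p : Fin N × Fin N, (C p : ℂ) * (Complex.I * ((θ p.2 : ℂ) - (θ p.1 : ℂ)))) := by
    rw [Complex.exp_sum]
    exact Finset.prod_congr rfl fun p _ => (Complex.exp_nat_mul _ _).symm
  have l2 : ∏ u, Complex.exp (Complex.I *
        ((((∑ j, (C (j,u) : ℤ)) - ∑ j, (C (u,j) : ℤ)) : ℤ) : ℂ) * (θ u : ℂ)) =
      Complex.exp (∑ u, Complex.I *
        ((((∑ j, (C (j,u) : ℤ)) - ∑ j, (C (u,j) : ℤ)) : ℤ) : ℂ) * (θ u : ℂ)) :=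
    (Complex.exp_sum _ _).symm
  rw [l1, l2]
  congr 1
  push_cast
  rw [Fintype.sum_prod_type]
  have key : ∀ u : Fin N, Complex.I * ((∑ j, (C (j,u) : ℂ)) - ∑ j, (C (u,j) : ℂ)) * (θ u : ℂ) =
      (∑ j, (C (j,u) : ℂ) * Complex.I * (θ u : ℂ)) -
      (∑ j, (C (u,j) : ℂ) * Complex.I * (θ u : ℂ)) := by
    intro u
    rw [mul_sub, sub_mul, Finset.mul_sum, Finset.mul_sum, Finset.sum_mul, Finset.sum_mul]
    congr 1 <;> exact Finset.sum_congr rfl fun j _ => by ring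
  rw [Finset.sum_congr rfl fun u _ => key u, Finset.sum_sub_distrib]
  have lhs : ∀ j : Fin N, ∑ k, (C (j,k) : ℂ) * (Complex.I * ((θ k : ℂ) - (θ j : ℂ))) =
      (∑ k, (C (j,k) : ℂ) * Complex.I * (θ k : ℂ)) -
      (∑ k, (C (j,k) : ℂ) * Complex.I * (θ j : ℂ)) := by
    intro j
    rw [← Finset.sum_sub_distrib]
    exact Finset.sum_congr rfl fun k _ => by ring
  rw [Finset.sum_congr rfl fun j _ => lhs j, Finset.sum_sub_distrib]
  congr 1
  exact Finset.sum_comm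


/-- A current: a matrix of naturals with balanced row and column sums. -/
def IsCurrent {N : ℕ} (C : Matrix (Fin N) (Fin N) ℕ) : Prop :=
  ∀ u, ∑ v, C u v = ∑ v, C v u

/-- The key integral identity: `(2π)^N Σ_{C current} ∏_{j,k} (t_j t_k)^{C_{jk}/2}
q_{jk}^{C_{jk}}/C_{jk}! = ∫_{[0,2π)^N} ∏_{j,k} exp(√(t_j t_k) q_{jk} e^{i(θ_k−θ_j)}) dθ`,
the sum (over currents) converging absolutely. -/
theorem current_sum_eq_torus_integral (N : ℕ) (Q : Matrix (Fin N) (Fin N) ℂ)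
    (t : Fin N → ℝ) (ht : ∀ j, 0 ≤ t j) :
    Summable (fun C : {C : Matrix (Fin N) (Fin N) ℕ // IsCurrent C} =>
        ∏ j, ∏ k, ((Real.sqrt (t j * t k) : ℂ) ^ C.1 j k * Q j k ^ C.1 j k /
          (Nat.factorial (C.1 j k) : ℂ))) ∧
    (2 * Real.pi : ℂ) ^ N *
        ∑' C : {C : Matrix (Fin N) (Fin N) ℕ // IsCurrent C},
          ∏ j, ∏ k, ((Real.sqrt (t j * t k) : ℂ) ^ C.1 j k * Q j k ^ C.1 j k /
            (Nat.factorial (C.1 j k) : ℂ)) =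
      ∫ θ in Set.pi Set.univ (fun _ : Fin N => Set.Ico (0 : ℝ) (2 * Real.pi)),
        ∏ j, ∏ k, Complex.exp ((Real.sqrt (t j * t k) : ℂ) * Q j k *
          Complex.exp (Complex.I * ((θ k : ℂ) - (θ j : ℂ)))) := by
  classical
  -- basic exp facts
  have hexp : ∀ z : ℂ, HasSum (fun n => z ^ n / (n ! : ℂ)) (Complex.exp z) := by
    intro z
    have h := NormedSpace.expSeries_div_hasSum_exp z
    rwa [← Complex.exp_eq_exp_ℂ] at h
  have hns : ∀ z : ℂ, Summable fun n => ‖z ^ n / (n ! : ℂ)‖ := by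
    intro z
    have h := Real.summable_pow_div_factorial ‖z‖
    simpa [norm_div, norm_pow] using h
  -- definitions
  set a : Fin N × Fin N → ℂ := fun p => (Real.sqrt (t p.1 * t p.2) : ℂ) * Q p.1 p.2 with ha
  set coef : (Fin N × Fin N → ℕ) → ℂ := fun C => ∏ p, a p ^ C p / ((C p)! : ℂ) with hcoef
  set rcoef : (Fin N × Fin N → ℕ) → ℝ := fun C => ∏ p, ‖a p‖ ^ C p / ((C p)! : ℝ) with hrcoef
  set Box : Set (Fin N → ℝ) := Set.pi Set.univ fun _ : Fin N => Set.Ico (0:ℝ) (2*Real.pi)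
    with hBoxdef
  set μ : Measure (Fin N → ℝ) := volume.restrict Box with hμ
  set w : (Fin N → ℝ) → (Fin N × Fin N) → ℂ :=
    fun θ p => a p * Complex.exp (Complex.I * ((θ p.2 : ℂ) - (θ p.1 : ℂ))) with hw
  set Fterm : (Fin N × Fin N → ℕ) → (Fin N → ℝ) → ℂ :=
    fun C θ => ∏ p, (w θ p) ^ C p / ((C p)! : ℂ) with hFterm
  set d : (Fin N × Fin N → ℕ) → Fin N → ℤ :=
    fun C u => (∑ j, (C (j,u) : ℤ)) - ∑ j, (C (u,j) : ℤ) with hd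
  set S : Set (Fin N × Fin N → ℕ) := {C | ∀ u, d C u = 0} with hS
  -- summability of coefficients
  have hasum_coef : HasSum coef (∏ p, Complex.exp (a p)) := by
    have h := hasSum_pi_prod (fun p n => a p ^ n / (n ! : ℂ)) (fun p => hns (a p))
    rwa [show (∏ p : Fin N × Fin N, ∑' n : ℕ, a p ^ n / (n ! : ℂ)) =
      ∏ p, Complex.exp (a p) from
      Finset.prod_congr rfl fun p _ => (hexp (a p)).tsum_eq] at h
  have hrsum : Summable rcoef := by
    have h := hasSum_pi_prod (𝕜 := ℝ) (fun p n => ‖a p‖ ^ n / (n ! : ℝ))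
      (fun p => by
        have h2 := Real.summable_pow_div_factorial ‖a p‖
        have : ∀ n : ℕ, ‖(‖a p‖ ^ n / (n ! : ℝ))‖ = ‖a p‖ ^ n / (n ! : ℝ) := by
          intro n
          rw [Real.norm_eq_abs, abs_of_nonneg (by positivity)]
        rw [show (fun n : ℕ => ‖(‖a p‖ ^ n / (n ! : ℝ))‖) =
          fun n : ℕ => ‖a p‖ ^ n / (n ! : ℝ) from funext this]
        exact h2)
    exact h.summable
  -- norms
  have hwnorm : ∀ (θ : Fin N → ℝ) p, ‖w θ p‖ = ‖a p‖ := by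
    intro θ p
    have h1 : ‖Complex.exp (Complex.I * ((θ p.2 : ℂ) - (θ p.1 : ℂ)))‖ = 1 := by
      rw [show Complex.I * ((θ p.2 : ℂ) - (θ p.1 : ℂ)) =
        ((θ p.2 - θ p.1 : ℝ) : ℂ) * Complex.I by push_cast; ring]
      exact Complex.norm_exp_ofReal_mul_I _
    simp [hw, norm_mul, h1]
  have hFnorm : ∀ C θ, ‖Fterm C θ‖ = rcoef C := by
    intro C θ
    rw [hFterm, hrcoef]
    rw [norm_prod]
    exact Finset.prod_congr rfl fun p _ => by
      rw [norm_div, norm_pow, hwnorm θ p]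
      simp
  -- measure facts
  have hBox : MeasurableSet Box := MeasurableSet.univ_pi fun _ => measurableSet_Ico
  have hvol : volume Box = (ENNReal.ofReal (2*Real.pi))^N := by
    rw [hBoxdef, MeasureTheory.volume_pi_pi]
    simp [Real.volume_Ico]
  haveI : IsFiniteMeasure μ := by
    refine ⟨?_⟩
    rw [hμ, Measure.restrict_apply_univ, hvol]
    exact ENNReal.pow_lt_top ENNReal.ofReal_lt_top
  -- continuity and integrability
  have hcont : ∀ C, Continuous (Fterm C) := by
    intro C
    apply continuous_finset_prod
    intro p _
    apply Continuous.div_const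
    apply Continuous.pow
    exact continuous_const.mul (Complex.continuous_exp.comp (continuous_const.mul
      ((Complex.continuous_ofReal.comp (continuous_apply p.2)).sub
        (Complex.continuous_ofReal.comp (continuous_apply p.1)))))
  have hint : ∀ C, Integrable (Fterm C) μ := by
    intro C
    refine (integrable_const (rcoef C)).mono' ((hcont C).aestronglyMeasurable) ?_
    filter_upwards with θ
    rw [hFnorm C θ]
  have hintnorm : ∀ C, ∫ θ, ‖Fterm C θ‖ ∂μ = (2*Real.pi)^N * rcoef C := by
    intro C
    rw [show (fun θ => ‖Fterm C θ‖) = fun _ => rcoef C from funext fun θ => hFnorm C θ]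
    rw [integral_const, hμ, measureReal_restrict_apply_univ, Measure.real, hvol]
    rw [ENNReal.toReal_pow, ENNReal.toReal_ofReal Real.two_pi_pos.le, smul_eq_mul]
  have hsummable_int : Summable fun C : Fin N × Fin N → ℕ => ∫ θ, ‖Fterm C θ‖ ∂μ := by
    rw [show (fun C : Fin N × Fin N → ℕ => ∫ θ, ‖Fterm C θ‖ ∂μ) =
      fun C => (2*Real.pi)^N * rcoef C from funext hintnorm]
    exact hrsum.mul_left _
  -- pointwise expansion
  have hpt : ∀ θ, HasSum (fun C => Fterm C θ) (∏ p, Complex.exp (w θ p)) := by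
    intro θ
    have h := hasSum_pi_prod (fun p n => (w θ p) ^ n / (n ! : ℂ)) (fun p => hns (w θ p))
    rwa [show (∏ p : Fin N × Fin N, ∑' n : ℕ, (w θ p) ^ n / (n ! : ℂ)) =
      ∏ p, Complex.exp (w θ p) from
      Finset.prod_congr rfl fun p _ => (hexp (w θ p)).tsum_eq] at h
  -- swap integral and sum
  have hswap : ∑' C : Fin N × Fin N → ℕ, ∫ θ, Fterm C θ ∂μ =
      ∫ θ, (∑' C : Fin N × Fin N → ℕ, Fterm C θ) ∂μ :=
    integral_tsum_of_summable_integral_norm hint hsummable_int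
  -- identify RHS
  have hRHS : ∫ θ, (∑' C : Fin N × Fin N → ℕ, Fterm C θ) ∂μ =
      ∫ θ in Box, ∏ j, ∏ k, Complex.exp ((Real.sqrt (t j * t k) : ℂ) * Q j k *
        Complex.exp (Complex.I * ((θ k : ℂ) - (θ j : ℂ)))) := by
    rw [hμ]
    apply integral_congr_ae
    filter_upwards with θ
    rw [(hpt θ).tsum_eq, Fintype.prod_prod_type]
  -- compute each integral
  have hCint : ∀ C, ∫ θ, Fterm C θ ∂μ =
      coef C * (if (∀ u, d C u = 0) then ((2*Real.pi : ℝ) : ℂ)^N else 0) := by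
    intro C
    have hsplit : ∀ θ : Fin N → ℝ, Fterm C θ =
        coef C * ∏ u, Complex.exp (Complex.I * ((d C u : ℤ) : ℂ) * (θ u : ℂ)) := by
      intro θ
      simp only [hFterm, hcoef]
      have e1 : ∀ p : Fin N × Fin N, (w θ p) ^ C p / ((C p)! : ℂ) =
          (a p ^ C p / ((C p)! : ℂ)) *
            Complex.exp (Complex.I * ((θ p.2 : ℂ) - (θ p.1 : ℂ))) ^ C p := by
        intro p
        rw [hw, mul_pow]
        ring
      rw [Finset.prod_congr rfl fun p _ => e1 p, Finset.prod_mul_distrib]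
      congr 1
      exact aux_expsum C θ
    rw [show (fun θ => Fterm C θ) = fun θ =>
      coef C * ∏ u, Complex.exp (Complex.I * ((d C u : ℤ) : ℂ) * (θ u : ℂ)) from
      funext hsplit]
    rw [integral_const_mul, hμ]
    rw [show (∫ θ in Box, ∏ u, Complex.exp (Complex.I * ((d C u : ℤ) : ℂ) * (θ u : ℂ))) =
      ∏ u, ∫ x in Set.Ico (0:ℝ) (2*Real.pi),
        Complex.exp (Complex.I * ((d C u : ℤ) : ℂ) * (x : ℂ)) from
      aux_box fun u x => Complex.exp (Complex.I * ((d C u : ℤ) : ℂ) * (x : ℂ))]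
    congr 1
    rw [Finset.prod_congr rfl fun u _ => aux_int (d C u)]
    by_cases hall : ∀ u, d C u = 0
    · rw [if_pos hall]
      rw [Finset.prod_congr rfl fun u _ => if_pos (hall u)]
      simp
    · rw [if_neg hall]
      push_neg at hall
      obtain ⟨u, hu⟩ := hall
      exact Finset.prod_eq_zero (Finset.mem_univ u) (if_neg hu)
  have hCint' : ∀ C, ∫ θ, Fterm C θ ∂μ = (2 * Real.pi : ℂ)^N * S.indicator coef C := by
    intro C
    rw [hCint C]
    by_cases h : ∀ u, d C u = 0
    · rw [if_pos h, Set.indicator_of_mem (show C ∈ S from h)]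
      push_cast
      ring
    · rw [if_neg h, Set.indicator_of_notMem (show C ∉ S from h)]
      ring
  let unc : Matrix (Fin N) (Fin N) ℕ ≃ (Fin N × Fin N → ℕ) :=
    ⟨fun M p => M p.1 p.2, fun C j k => C (j,k), fun M => rfl, fun C => rfl⟩
  have hiff : ∀ M : Matrix (Fin N) (Fin N) ℕ, IsCurrent M ↔ (unc M) ∈ S := by
    intro M
    constructor
    · intro h u
      simp only [hd, sub_eq_zero]
      exact_mod_cast (h u).symm
    · intro h u
      have h2 := h u
      simp only [hd, sub_eq_zero] at h2
      exact_mod_cast h2.symm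
  let E : {C : Matrix (Fin N) (Fin N) ℕ // IsCurrent C} ≃ {C : Fin N × Fin N → ℕ // C ∈ S} :=
    unc.subtypeEquiv hiff
  have hsummand : ∀ M : Matrix (Fin N) (Fin N) ℕ,
      (∏ j, ∏ k, ((Real.sqrt (t j * t k) : ℂ) ^ M j k * Q j k ^ M j k /
        (Nat.factorial (M j k) : ℂ))) = coef (unc M) := by
    intro M
    have h1 : coef (unc M) = ∏ j, ∏ k, a (j,k) ^ M j k / (Nat.factorial (M j k) : ℂ) := by
      rw [hcoef]
      exact Fintype.prod_prod_type _
    rw [h1]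
    simp only [ha]
    exact Finset.prod_congr rfl fun j _ => Finset.prod_congr rfl fun k _ => by rw [mul_pow]
  have hsubS : Summable (fun C : {C : Fin N × Fin N → ℕ // C ∈ S} => coef C.1) :=
    hasum_coef.summable.subtype S
  have hfeq : (fun M : {C : Matrix (Fin N) (Fin N) ℕ // IsCurrent C} =>
      ∏ j, ∏ k, ((Real.sqrt (t j * t k) : ℂ) ^ M.1 j k * Q j k ^ M.1 j k /
        (Nat.factorial (M.1 j k) : ℂ))) =
      (fun C : {C : Fin N × Fin N → ℕ // C ∈ S} => coef C.1) ∘ E := by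
    funext M
    exact hsummand M.1
  constructor
  · rw [hfeq]
    exact (Equiv.summable_iff E).mpr hsubS
  · rw [hfeq]
    have htsum : ∑' M : {C : Matrix (Fin N) (Fin N) ℕ // IsCurrent C},
        ((fun C : {C : Fin N × Fin N → ℕ // C ∈ S} => coef C.1) ∘ E) M =
        ∑' C : {C : Fin N × Fin N → ℕ // C ∈ S}, coef C.1 :=
      E.tsum_eq (fun C : {C : Fin N × Fin N → ℕ // C ∈ S} => coef C.1)
    rw [htsum, tsum_subtype S coef]
    rw [← hRHS, ← hswap]
    rw [show (∑' C : Fin N × Fin N → ℕ, ∫ θ, Fterm C θ ∂μ) =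
      ∑' C : Fin N × Fin N → ℕ, (2 * Real.pi : ℂ)^N * S.indicator coef C from
      tsum_congr fun C => hCint' C]
    rw [tsum_mul_left]
end
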